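/- Generalized Gaussian elimination for cochain complexes: Let R be a ring and, for each i ∈ ℤ, let A i and B i be R-modules with R-linear maps a i : A i → A (i+1), b i : B i → B (i+1), c i : A i → B (i+1), d i : B i → A (i+1) such that the maps δ i : A i × B i → A (i+1) × B (i+1) defined by δ i (x, y) = (a i x + d i y, c i x + b i y) satisfy δ (i+1) ∘ δ i = 0. Suppose moreover that b (i+1) ∘ b i = 0 for all i and that there are R-linear maps h i : B i → B (i-1) with h (i+1) ∘ b i + b (i-1) ∘ h i = -id on B i for all i (i.e. (B, b) is null-homotopic). Then the maps a' i := a i + d i ∘ h (i+1) ∘ c i satisfy a' (i+1) ∘ a' i = 0, and the resulting cochain complex (A, a') is homotopy equivalent to (A × B, δ): there exist R-linear maps f i : A i × B i → A i and g i : A i → A i × B i with f (i+1) ∘ δ i = a' i ∘ f i and δ i ∘ g i = g (i+1) ∘ a' i, together with R-linear maps H i : A i × B i → A (i-1) × B (i-1) and H' i : A i → A (i-1) such that g i ∘ f i - id = H (i+1) ∘ δ i + δ (i-1) ∘ H i and f i ∘ g i - id = H' (i+1) ∘ a' i + a' (i-1) ∘ H' i. -/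

import Mathlib

section GEHelpers

variable {R : Type*} [Ring R] {A B : ℤ → Type*}
  [∀ i, AddCommGroup (A i)] [∀ i, AddCommGroup (B i)]
  [∀ i, Module R (A i)] [∀ i, Module R (B i)]

/-- transported composite `d j ∘ h j : B (j+1) →ₗ A (j+1)` along `j + 1 = i`. -/
def GEtAux (d : ∀ i, B i →ₗ[R] A (i + 1)) (h : ∀ i, B (i + 1) →ₗ[R] B i)
    (j i : ℤ) (e : j + 1 = i) : B i →ₗ[R] A i := e ▸ (d j ∘ₗ h j)

lemma GEtAux_congr (d : ∀ i, B i →ₗ[R] A (i + 1)) (h : ∀ i, B (i + 1) →ₗ[R] B i)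
    (j j' i : ℤ) (e : j + 1 = i) (e' : j' + 1 = i) :
    GEtAux d h j i e = GEtAux d h j' i e' := by
  have hjj : j = j' := by omega
  subst hjj; rfl

/-- the degree-preserving map `B i →ₗ A i` given by `d (i-1) ∘ h (i-1)` up to cast. -/
def GEt (d : ∀ i, B i →ₗ[R] A (i + 1)) (h : ∀ i, B (i + 1) →ₗ[R] B i)
    (i : ℤ) : B i →ₗ[R] A i := GEtAux d h (i - 1) i (by omega)

lemma GEt_succ (d : ∀ i, B i →ₗ[R] A (i + 1)) (h : ∀ i, B (i + 1) →ₗ[R] B i)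
    (i : ℤ) : GEt d h (i + 1) = d i ∘ₗ h i := by
  rw [GEt, GEtAux_congr d h _ i _ _ rfl]
  rfl

end GEHelpers

/-- Generalized Gaussian elimination for cochain complexes of `R`-modules indexed by `ℤ`.
Here `a i : A i →ₗ A (i+1)`, `b i : B i →ₗ B (i+1)`, `c i : A i →ₗ B (i+1)`,
`d i : B i →ₗ A (i+1)` and `δ i (x, y) = (a i x + d i y, c i x + b i y)` with
`δ ∘ δ = 0` and `b ∘ b = 0`.  The degree `-1` maps `h` (with `h i : B (i+1) →ₗ B i`
playing the role of the map `B (i+1) → B i` of the informal statement) give a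
null-homotopy of `(B, b)`:  `h ∘ b + b ∘ h = -id` in every degree.  Then the reduced
differential `a' i = a i + d i ∘ h i ∘ c i` squares to zero and `(A, a')` is homotopy
equivalent to `(A × B, δ)` via chain maps `f`, `g` and homotopies `H`, `H'`. -/
theorem gaussian_elimination_cochain_complexes
    {R : Type*} [Ring R] {A B : ℤ → Type*}
    [∀ i, AddCommGroup (A i)] [∀ i, AddCommGroup (B i)]
    [∀ i, Module R (A i)] [∀ i, Module R (B i)]
    (a : ∀ i, A i →ₗ[R] A (i + 1)) (b : ∀ i, B i →ₗ[R] B (i + 1))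
    (c : ∀ i, A i →ₗ[R] B (i + 1)) (d : ∀ i, B i →ₗ[R] A (i + 1))
    (δ : ∀ i, (A i × B i) →ₗ[R] (A (i + 1) × B (i + 1)))
    (hδ : ∀ (i : ℤ) (x : A i) (y : B i), δ i (x, y) = (a i x + d i y, c i x + b i y))
    (hδδ : ∀ i : ℤ, δ (i + 1) ∘ₗ δ i = 0)
    (hbb : ∀ i : ℤ, b (i + 1) ∘ₗ b i = 0)
    (h : ∀ i, B (i + 1) →ₗ[R] B i)
    (hhb : ∀ i : ℤ, h (i + 1) ∘ₗ b (i + 1) + b i ∘ₗ h i =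
      -(LinearMap.id : B (i + 1) →ₗ[R] B (i + 1))) :
    (∀ i : ℤ,
      (a (i + 1) + d (i + 1) ∘ₗ h (i + 1) ∘ₗ c (i + 1)) ∘ₗ (a i + d i ∘ₗ h i ∘ₗ c i) = 0) ∧
    ∃ (f : ∀ i, (A i × B i) →ₗ[R] A i) (g : ∀ i, A i →ₗ[R] (A i × B i))
      (H : ∀ i, (A (i + 1) × B (i + 1)) →ₗ[R] (A i × B i)) (H' : ∀ i, A (i + 1) →ₗ[R] A i),
      (∀ i : ℤ, f (i + 1) ∘ₗ δ i = (a i + d i ∘ₗ h i ∘ₗ c i) ∘ₗ f i) ∧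
      (∀ i : ℤ, δ i ∘ₗ g i = g (i + 1) ∘ₗ (a i + d i ∘ₗ h i ∘ₗ c i)) ∧
      (∀ i : ℤ, g (i + 1) ∘ₗ f (i + 1) - LinearMap.id = H (i + 1) ∘ₗ δ (i + 1) + δ i ∘ₗ H i) ∧
      (∀ i : ℤ, f (i + 1) ∘ₗ g (i + 1) - LinearMap.id =
        H' (i + 1) ∘ₗ (a (i + 1) + d (i + 1) ∘ₗ h (i + 1) ∘ₗ c (i + 1)) +
          (a i + d i ∘ₗ h i ∘ₗ c i) ∘ₗ H' i) := by
  -- pointwise consequences of `δ ∘ δ = 0`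
  have key : ∀ (i : ℤ) (x : A i) (y : B i),
      a (i+1) (a i x + d i y) + d (i+1) (c i x + b i y) = 0 ∧
      c (i+1) (a i x + d i y) + b (i+1) (c i x + b i y) = 0 := by
    intro i x y
    have h0 := DFunLike.congr_fun (hδδ i) (x, y)
    rw [LinearMap.comp_apply, hδ, hδ] at h0
    simpa [Prod.ext_iff] using h0
  have hB : ∀ (i : ℤ) (y : B i), b (i+1) (b i y) = 0 := by
    intro i y
    simpa using DFunLike.congr_fun (hbb i) y
  have hR1 : ∀ (i : ℤ) (x : A i), a (i+1) (a i x) = - d (i+1) (c i x) := by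
    intro i x
    have h0 := (key i x 0).1
    simp only [map_zero, add_zero] at h0
    exact eq_neg_of_add_eq_zero_left h0
  have hR2 : ∀ (i : ℤ) (x : A i), c (i+1) (a i x) = - b (i+1) (c i x) := by
    intro i x
    have h0 := (key i x 0).2
    simp only [map_zero, add_zero] at h0
    exact eq_neg_of_add_eq_zero_left h0
  have hR3 : ∀ (i : ℤ) (y : B i), a (i+1) (d i y) = - d (i+1) (b i y) := by
    intro i y
    have h0 := (key i 0 y).1
    simp only [map_zero, zero_add] at h0
    exact eq_neg_of_add_eq_zero_left h0
  have hR4 : ∀ (i : ℤ) (y : B i), c (i+1) (d i y) = 0 := by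
    intro i y
    have h0 := (key i 0 y).2
    simp only [map_zero, zero_add, hB] at h0
    simpa using h0
  have hH : ∀ (i : ℤ) (y : B (i+1)), h (i+1) (b (i+1) y) = -y - b i (h i y) := by
    intro i y
    have h0 := DFunLike.congr_fun (hhb i) y
    simp only [LinearMap.add_apply, LinearMap.comp_apply, LinearMap.neg_apply,
      LinearMap.id_apply] at h0
    linear_combination (norm := abel) h0
  refine ⟨?_, fun i => LinearMap.fst R (A i) (B i) + GEt d h i ∘ₗ LinearMap.snd R (A i) (B i),
    fun i => LinearMap.prod LinearMap.id (h i ∘ₗ c i),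
    fun i => LinearMap.prod 0 (h i ∘ₗ LinearMap.snd R (A (i+1)) (B (i+1))),
    fun i => GEt d h i ∘ₗ h i ∘ₗ h (i+1) ∘ₗ c (i+1), ?_, ?_, ?_, ?_⟩
  · -- a' ∘ a' = 0
    intro i
    refine LinearMap.ext fun x => ?_
    simp only [LinearMap.comp_apply, LinearMap.add_apply, LinearMap.zero_apply,
      map_add, hR1, hR2, hR3, hR4, map_neg, map_zero, hH, map_sub, add_zero]
    abel
  · -- f is a chain map
    intro i
    obtain ⟨j, rfl⟩ : ∃ j, j + 1 = i := ⟨i - 1, by omega⟩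
    refine LinearMap.ext fun p => ?_
    obtain ⟨x, y⟩ := p
    simp only [LinearMap.comp_apply, LinearMap.add_apply, hδ, GEt_succ,
      LinearMap.fst_apply, LinearMap.snd_apply, map_add, hR3, hR4, map_neg,
      map_zero, hH, map_sub, add_zero]
    abel
  · -- g is a chain map
    intro i
    refine LinearMap.ext fun x => ?_
    simp only [LinearMap.comp_apply, LinearMap.add_apply, LinearMap.prod_apply,
      Function.prod, LinearMap.id_apply, hδ, map_add, hR2, hR4, map_neg, map_zero,
      hH, map_sub, add_zero, Prod.mk_add_mk, Prod.mk.injEq]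
    exact ⟨trivial, by abel⟩
  · -- homotopy g ∘ f ≃ id
    intro i
    refine LinearMap.ext fun p => ?_
    obtain ⟨x, y⟩ := p
    simp only [LinearMap.sub_apply, LinearMap.add_apply, LinearMap.comp_apply,
      LinearMap.prod_apply, Function.prod, LinearMap.id_apply, LinearMap.zero_apply,
      LinearMap.fst_apply, LinearMap.snd_apply, GEt_succ, hδ, map_add, hR4,
      map_zero, add_zero, hH, Prod.mk_add_mk, Prod.mk_sub_mk, Prod.mk.injEq]
    constructor
    · abel
    · abel
  · -- homotopy f ∘ g ≃ id
    intro i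
    obtain ⟨j, rfl⟩ : ∃ j, j + 1 = i := ⟨i - 1, by omega⟩
    refine LinearMap.ext fun x => ?_
    simp only [LinearMap.sub_apply, LinearMap.add_apply, LinearMap.comp_apply,
      LinearMap.prod_apply, Function.prod, LinearMap.id_apply, LinearMap.fst_apply,
      LinearMap.snd_apply, GEt_succ, map_add, hR2, hR3, hR4, map_neg, map_zero,
      hH, map_sub, add_zero]
    abel
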